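/- If f : V → ℝ is 1-Lipschitz with respect to the graph metric of a finite connected graph, then the function L^α f is also Lipschitz: for adjacent vertices i, j one has |(L^α f)(i) − (L^α f)(j)| ≤ 3 − 2α. -/

import Mathlib

open Finset

variable {V : Type*} [Fintype V] [DecidableEq V]

/-- The α-lazy random walk operator acting on functions. -/
noncomputable def lazyOp (G : SimpleGraph V) [DecidableRel G.Adj] (α : ℝ) (f : V → ℝ)
    (i : V) : ℝ :=
  α * f i + (1 - α) / (G.degree i : ℝ) * ∑ v ∈ G.neighborFinset i, f v

/-- If `f` is 1-Lipschitz for the graph metric of a finite connected graph, then for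
adjacent vertices `i, j` we have `|(L^α f)(i) - (L^α f)(j)| ≤ 3 - 2α`. -/
theorem lazyOp_lipschitz (G : SimpleGraph V) [DecidableRel G.Adj] (hconn : G.Connected)
    (α : ℝ) (hα : α ∈ Set.Icc (0:ℝ) 1) (f : V → ℝ)
    (hf : ∀ x y, |f x - f y| ≤ (G.dist x y : ℝ)) (i j : V) (hij : G.Adj i j) :
    |lazyOp G α f i - lazyOp G α f j| ≤ 3 - 2 * α := by
  obtain ⟨hα0, hα1⟩ := hα
  have hdi : (0 : ℝ) < (G.degree i : ℝ) := by
    exact_mod_cast (G.degree_pos_iff_exists_adj i).2 ⟨j, hij⟩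
  have hdj : (0 : ℝ) < (G.degree j : ℝ) := by
    exact_mod_cast (G.degree_pos_iff_exists_adj j).2 ⟨i, hij.symm⟩
  -- average bound lemma
  have key : ∀ (x : V) (B : ℝ), (0:ℝ) < (G.degree x : ℝ) →
      (∀ v ∈ G.neighborFinset x, |f v - f j| ≤ B) →
      |(∑ v ∈ G.neighborFinset x, f v) / (G.degree x : ℝ) - f j| ≤ B := by
    intro x B hdxpos hB
    have hdx : (G.neighborFinset x).card = G.degree x := G.card_neighborFinset_eq_degree x
    have h1 : |(∑ v ∈ G.neighborFinset x, f v) - (G.degree x : ℝ) * f j|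
        ≤ (G.degree x : ℝ) * B := by
      calc |∑ v ∈ G.neighborFinset x, f v - (G.degree x : ℝ) * f j|
          = |∑ v ∈ G.neighborFinset x, (f v - f j)| := by
            rw [Finset.sum_sub_distrib, Finset.sum_const, hdx, nsmul_eq_mul]
        _ ≤ ∑ v ∈ G.neighborFinset x, |f v - f j| := Finset.abs_sum_le_sum_abs _ _
        _ ≤ ∑ v ∈ G.neighborFinset x, B := Finset.sum_le_sum hB
        _ = (G.degree x : ℝ) * B := by rw [Finset.sum_const, hdx, nsmul_eq_mul]
    have h2 : |((∑ v ∈ G.neighborFinset x, f v) - (G.degree x : ℝ) * f j)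
        / (G.degree x : ℝ)| ≤ B := by
      rw [abs_div, abs_of_pos hdxpos, div_le_iff₀ hdxpos]
      linarith [h1]
    rwa [sub_div, mul_comm, mul_div_assoc, div_self (ne_of_gt hdxpos), mul_one] at h2
  -- bounds on neighbors
  have hNi : ∀ v ∈ G.neighborFinset i, |f v - f j| ≤ 2 := by
    intro v hv
    rw [SimpleGraph.mem_neighborFinset] at hv
    have hd : G.dist v j ≤ 2 := by
      calc G.dist v j ≤ G.dist v i + G.dist i j := hconn.dist_triangle
        _ ≤ 1 + 1 := add_le_add
            (le_of_eq (SimpleGraph.dist_eq_one_iff_adj.2 hv.symm))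
            (le_of_eq (SimpleGraph.dist_eq_one_iff_adj.2 hij))
        _ = 2 := rfl
    calc |f v - f j| ≤ (G.dist v j : ℝ) := hf v j
      _ ≤ 2 := by exact_mod_cast hd
  have hNj : ∀ v ∈ G.neighborFinset j, |f v - f j| ≤ 1 := by
    intro v hv
    rw [SimpleGraph.mem_neighborFinset] at hv
    calc |f v - f j| ≤ (G.dist v j : ℝ) := hf v j
      _ ≤ 1 := by exact_mod_cast le_of_eq (SimpleGraph.dist_eq_one_iff_adj.2 hv.symm)
  have hAi := key i 2 hdi hNi
  have hAj := key j 1 hdj hNj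
  have hfij : |f i - f j| ≤ 1 := by
    calc |f i - f j| ≤ (G.dist i j : ℝ) := hf i j
      _ ≤ 1 := by exact_mod_cast le_of_eq (SimpleGraph.dist_eq_one_iff_adj.2 hij)
  -- rewrite the difference
  set Ai := (∑ v ∈ G.neighborFinset i, f v) / (G.degree i : ℝ) with hAidef
  set Aj := (∑ v ∈ G.neighborFinset j, f v) / (G.degree j : ℝ) with hAjdef
  have hrw : lazyOp G α f i - lazyOp G α f j
      = α * (f i - f j) + (1 - α) * (Ai - f j) - (1 - α) * (Aj - f j) := by
    unfold lazyOp
    rw [hAidef, hAjdef]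
    field_simp
    ring
  rw [hrw]
  have h1α : (0:ℝ) ≤ 1 - α := by linarith
  calc |α * (f i - f j) + (1 - α) * (Ai - f j) - (1 - α) * (Aj - f j)|
      ≤ |α * (f i - f j) + (1 - α) * (Ai - f j)| + |(1 - α) * (Aj - f j)| :=
        abs_sub _ _
    _ ≤ |α * (f i - f j)| + |(1 - α) * (Ai - f j)| + |(1 - α) * (Aj - f j)| :=
        add_le_add_left (abs_add_le _ _) _
    _ = α * |f i - f j| + (1 - α) * |Ai - f j| + (1 - α) * |Aj - f j| := by
        rw [abs_mul, abs_mul, abs_mul, abs_of_nonneg hα0, abs_of_nonneg h1α]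
    _ ≤ α * 1 + (1 - α) * 2 + (1 - α) * 1 := by
        gcongr
    _ = 3 - 2 * α := by ring
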